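/- arXiv:1401.3822 — 3 statements merged into one kernel-verified Lean document; each statement's English description precedes it below -/
import Mathlib

section
/- Let n ≥ 1 be an integer, m > 0, H > 0 and β > 0. Let a(t) = exp(H t^β) for t > 0 and define the curved mass c(t) = m² + (n/2 − n²/4)(ȧ(t)/a(t))² − (n/2)(ä(t)/a(t)), so that c(t) = m² − (1/4) β H n t^{β−2} ( β H n t^{β} + 2β − 2 ). Then the following are equivalent: (i) there exists t₀ > 0 such that c(t) > 0 and ċ(t) ≤ 0 for all t ≥ t₀; (ii) β = 1 and H < 2m/n. -/
noncomputable section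

/-- for the scale factor `a(t) = exp(H t^β)` with `H > 0`, `β > 0` and
`m > 0`, the curved mass is eventually positive with non-positive derivative if and
only if `β = 1` (de Sitter) and `H < 2m/n` (large mass). -/
theorem stmt_15 (n : ℕ) (hn : 1 ≤ n) (m H β : ℝ) (hm : 0 < m) (hH : 0 < H)
    (hβ : 0 < β)
    (a c : ℝ → ℝ) (ha : a = fun t => Real.exp (H * t ^ β))
    (hc : c = fun t => m ^ 2
      + ((n : ℝ) / 2 - (n : ℝ) ^ 2 / 4) * (deriv a t / a t) ^ 2
      - ((n : ℝ) / 2) * (deriv (deriv a) t / a t)) :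
    (∃ t₀ : ℝ, 0 < t₀ ∧ ∀ t : ℝ, t₀ ≤ t → 0 < c t ∧ deriv c t ≤ 0) ↔
      (β = 1 ∧ H < 2 * m / (n : ℝ)) := by
  have hn' : (0:ℝ) < n := by exact_mod_cast Nat.pos_of_ne_zero (by omega)
  set K1 : ℝ := ((n:ℝ)^2/4)*(H*β)^2 with hK1
  set K2 : ℝ := ((n:ℝ)/2)*(H*β)*(β-1) with hK2
  have hK1pos : 0 < K1 := by positivity
  -- explicit formula for c on (0, ∞)
  have hcE : ∀ t : ℝ, 0 < t → c t = m^2 - K1 * t^(2*β-2) - K2 * t^(β-2) := by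
    have hda : ∀ s : ℝ, 0 < s →
        HasDerivAt a (H * β * s^(β-1) * Real.exp (H * s^β)) s := by
      intro s hs
      have hd1 : HasDerivAt (fun x : ℝ => x ^ β) (β * s^(β-1)) s :=
        Real.hasDerivAt_rpow_const (Or.inl hs.ne')
      have hd2 : HasDerivAt (fun x : ℝ => H * x ^ β) (H * (β * s^(β-1))) s :=
        hd1.const_mul H
      have := hd2.exp
      rw [ha]
      convert this using 1
      ring
    have hda' : ∀ s : ℝ, 0 < s →
        deriv a s = H * β * s^(β-1) * Real.exp (H * s^β) := fun s hs => (hda s hs).deriv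
    intro t ht
    have hEq : deriv a =ᶠ[nhds t] fun s => H * β * s^(β-1) * Real.exp (H * s^β) := by
      filter_upwards [Ioi_mem_nhds ht] with s hs
      exact hda' s hs
    have hd1 : HasDerivAt (fun x : ℝ => x ^ (β-1)) ((β-1) * t^(β-2)) t := by
      have := Real.hasDerivAt_rpow_const (x := t) (p := β-1) (Or.inl ht.ne')
      convert this using 2
      ring
    have hg1 : HasDerivAt (fun s : ℝ => H * β * s^(β-1)) (H*β*((β-1)*t^(β-2))) t :=
      hd1.const_mul (H*β)
    have hg2 : HasDerivAt (fun s : ℝ => Real.exp (H * s^β))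
        (H * (β * t^(β-1)) * Real.exp (H * t^β)) t := by
      have hd1' : HasDerivAt (fun x : ℝ => x ^ β) (β * t^(β-1)) t :=
        Real.hasDerivAt_rpow_const (Or.inl ht.ne')
      have := (hd1'.const_mul H).exp
      convert this using 1
      ring
    have hg := hg1.mul hg2
    have hdd : deriv (deriv a) t
        = H*β*((β-1)*t^(β-2)) * Real.exp (H*t^β)
          + (H*β*t^(β-1)) * (H * (β * t^(β-1)) * Real.exp (H*t^β)) := by
      rw [hEq.deriv_eq]
      exact hg.deriv
    have hexp : Real.exp (H*t^β) ≠ 0 := Real.exp_ne_zero _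
    have hat : a t = Real.exp (H*t^β) := by rw [ha]
    have e1 : deriv a t / a t = H * β * t^(β-1) := by
      rw [hda' t ht, hat, mul_div_assoc, div_self hexp, mul_one]
    have e2 : deriv (deriv a) t / a t
        = H*β*((β-1)*t^(β-2)) + (H*β*t^(β-1)) * (H * (β * t^(β-1))) := by
      rw [hdd, hat]
      field_simp
    have hmul : t^(β-1) * t^(β-1) = t^(2*β-2) := by
      rw [← Real.rpow_add ht]; ring_nf
    rw [hc]
    simp only
    rw [e1, e2, ← hmul, hK1, hK2]
    ring
  -- explicit formula for deriv c on (0, ∞)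
  have hdcE : ∀ t : ℝ, 0 < t →
      deriv c t = -(K1 * (2*β-2)) * t^(2*β-3) - (K2 * (β-2)) * t^(β-3) := by
    intro t ht
    have hEq : c =ᶠ[nhds t] fun s => m^2 - K1 * s^(2*β-2) - K2 * s^(β-2) := by
      filter_upwards [Ioi_mem_nhds ht] with s hs
      exact hcE s hs
    rw [hEq.deriv_eq]
    have hA : HasDerivAt (fun s : ℝ => s ^ (2*β-2)) ((2*β-2) * t^(2*β-3)) t := by
      have := Real.hasDerivAt_rpow_const (x := t) (p := 2*β-2) (Or.inl ht.ne')
      convert this using 2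
      ring
    have hB : HasDerivAt (fun s : ℝ => s ^ (β-2)) ((β-2) * t^(β-3)) t := by
      have := Real.hasDerivAt_rpow_const (x := t) (p := β-2) (Or.inl ht.ne')
      convert this using 2
      ring
    have : HasDerivAt (fun s : ℝ => m^2 - K1 * s^(2*β-2) - K2 * s^(β-2))
        (-(K1 * (2*β-2)) * t^(2*β-3) - (K2 * (β-2)) * t^(β-3)) t := by
      have h1 := ((hA.const_mul K1).const_sub (m^2)).sub (hB.const_mul K2)
      convert h1 using 1
      · rfl
      · rfl
      · rfl
      · ring
    exact this.deriv
  constructor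
  · rintro ⟨t₀, ht₀, hcon⟩
    rcases lt_trichotomy β 1 with hb | hb | hb
    · -- β < 1 : derivative eventually positive, contradiction
      exfalso
      have hD : 0 < K1 * (2 - 2*β) := by
        apply mul_pos hK1pos; linarith
      obtain ⟨t, h1, h2⟩ := (((tendsto_rpow_atTop hβ).eventually_gt_atTop
          (K2 * (β-2) / (K1 * (2-2*β)))).and (Filter.eventually_ge_atTop (max t₀ 1))).exists
      have ht1 : (1:ℝ) ≤ t := le_trans (le_max_right _ _) h2
      have ht : (0:ℝ) < t := lt_of_lt_of_le one_pos ht1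
      have hle := (hcon t (le_trans (le_max_left _ _) h2)).2
      rw [hdcE t ht] at hle
      have hsplit : t^(2*β-3) = t^(β-3) * t^β := by
        rw [← Real.rpow_add ht]; ring_nf
      have hQ : K2 * (β-2) < t^β * (K1 * (2-2*β)) := (div_lt_iff₀ hD).mp h1
      have htp : 0 < t^(β-3) := Real.rpow_pos_of_pos ht _
      rw [hsplit] at hle
      nlinarith [mul_pos htp (sub_pos.mpr hQ)]
    · -- β = 1 : extract H < 2m/n
      refine ⟨hb, ?_⟩
      subst hb
      have ht : (0:ℝ) < max t₀ 1 := lt_of_lt_of_le one_pos (le_max_right _ _)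
      have hpos := (hcon (max t₀ 1) (le_max_left _ _)).1
      rw [hcE _ ht] at hpos
      have h20 : (2*(1:ℝ)-2) = 0 := by norm_num
      rw [h20, Real.rpow_zero] at hpos
      have hK2z : K2 = 0 := by rw [hK2]; ring
      rw [hK2z] at hpos
      simp only [hK1, mul_one, zero_mul, sub_zero] at hpos
      rw [lt_div_iff₀ hn']
      have h2 : 0 < 2*m + H*(n:ℝ) := by positivity
      nlinarith [hpos, h2]
    · -- β > 1 : c eventually negative, contradiction
      exfalso
      have h2b : (0:ℝ) < 2*β - 2 := by linarith
      obtain ⟨t, h1, h2⟩ := (((tendsto_rpow_atTop h2b).eventually_gt_atTop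
          (m^2 / K1)).and (Filter.eventually_ge_atTop (max t₀ 1))).exists
      have ht1 : (1:ℝ) ≤ t := le_trans (le_max_right _ _) h2
      have ht : (0:ℝ) < t := lt_of_lt_of_le one_pos ht1
      have hpos := (hcon t (le_trans (le_max_left _ _) h2)).1
      rw [hcE t ht] at hpos
      have hK2pos : 0 < K2 := by
        rw [hK2]
        apply mul_pos (by positivity)
        linarith
      have hm2 : m^2 < K1 * t^(2*β-2) := (div_lt_iff₀' hK1pos).mp h1
      have htp2 : 0 < t^(β-2) := Real.rpow_pos_of_pos ht _
      nlinarith [mul_pos hK2pos htp2]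
  · rintro ⟨hb, hmH⟩
    subst hb
    refine ⟨1, one_pos, fun t ht => ?_⟩
    have ht0 : (0:ℝ) < t := lt_of_lt_of_le one_pos ht
    have hK2z : K2 = 0 := by rw [hK2]; ring
    have h20 : (2*(1:ℝ)-2) = 0 := by norm_num
    constructor
    · rw [hcE t ht0, h20, Real.rpow_zero, hK2z]
      have : H * (n:ℝ) < 2 * m := by
        rw [lt_div_iff₀ hn'] at hmH
        linarith
      simp only [hK1, mul_one, zero_mul, sub_zero]
      have h1 : 0 < 2*m - H*(n:ℝ) := by linarith
      have h2 : 0 < 2*m + H*(n:ℝ) := by positivity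
      nlinarith [mul_pos h1 h2]
    · rw [hdcE t ht0, hK2z]
      have : K1 * (2*(1:ℝ)-2) = 0 := by norm_num
      rw [this]
      simp
end
end

section
/- Let n ≥ 1 be an integer, m > 0, H < 0 and β < 0. Let a(t) = exp(H t^β) for t > 0 and define the curved mass c(t) = m² + (n/2 − n²/4)(ȧ(t)/a(t))² − (n/2)(ä(t)/a(t)). Then: (i) ȧ(t) > 0 for all t > 0; and (ii) there exists t₀ > 0 such that for all t ≥ t₀ one has c(t) > 0 and ċ(t) ≤ 0. -/
noncomputable section

open Filter Real

/-- for the scale factor `a(t) = exp(H t^β)` with `H < 0` and `β < 0`,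
the universe is expanding, and the curved mass is eventually positive with
non-positive derivative. -/
theorem stmt_16 (n : ℕ) (hn : 1 ≤ n) (m H β : ℝ) (hm : 0 < m) (hH : H < 0)
    (hβ : β < 0)
    (a c : ℝ → ℝ) (ha : a = fun t => Real.exp (H * t ^ β))
    (hc : c = fun t => m ^ 2
      + ((n : ℝ) / 2 - (n : ℝ) ^ 2 / 4) * (deriv a t / a t) ^ 2
      - ((n : ℝ) / 2) * (deriv (deriv a) t / a t)) :
    (∀ t : ℝ, 0 < t → 0 < deriv a t) ∧
    (∃ t₀ : ℝ, 0 < t₀ ∧ ∀ t : ℝ, t₀ ≤ t → 0 < c t ∧ deriv c t ≤ 0) := by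
  set k : ℝ := H * β with hk
  have hk0 : 0 < k := mul_pos_of_neg_of_neg hH hβ
  have hn1 : (1:ℝ) ≤ (n:ℝ) := by exact_mod_cast hn
  have hapos : ∀ t : ℝ, 0 < a t := by intro t; rw [ha]; exact Real.exp_pos _
  -- first derivative
  have hda : ∀ t : ℝ, 0 < t → HasDerivAt a (k * t ^ (β - 1) * a t) t := by
    intro t ht
    have h1 : HasDerivAt (fun x : ℝ => x ^ β) (β * t ^ (β - 1)) t :=
      Real.hasDerivAt_rpow_const (Or.inl ht.ne')
    have h3 := (h1.const_mul H).exp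
    rw [ha]
    convert h3 using 1
    ring
  have hderiv : ∀ t : ℝ, 0 < t → deriv a t = k * t ^ (β - 1) * a t :=
    fun t ht => (hda t ht).deriv
  have part1 : ∀ t : ℝ, 0 < t → 0 < deriv a t := by
    intro t ht
    rw [hderiv t ht]
    exact mul_pos (mul_pos hk0 (Real.rpow_pos_of_pos ht (β - 1))) (hapos t)
  -- second derivative
  have hda2 : ∀ t : ℝ, 0 < t → deriv (deriv a) t
      = k * ((β - 1) * t ^ (β - 2)) * a t + k * t ^ (β - 1) * (k * t ^ (β - 1) * a t) := by
    intro t ht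
    have heq : deriv a =ᶠ[nhds t] fun s => k * s ^ (β - 1) * a s := by
      filter_upwards [IsOpen.mem_nhds isOpen_Ioi ht] with s hs
      exact hderiv s hs
    rw [heq.deriv_eq]
    have h1 : HasDerivAt (fun s : ℝ => k * s ^ (β - 1)) (k * ((β - 1) * t ^ (β - 1 - 1))) t :=
      (Real.hasDerivAt_rpow_const (Or.inl ht.ne')).const_mul k
    have h2 := h1.mul (hda t ht)
    have : β - 1 - 1 = β - 2 := by ring
    rw [this] at h2
    exact h2.deriv
  -- closed form for c
  set g : ℝ → ℝ := fun t => m ^ 2 - ((n:ℝ) ^ 2 / 4) * k ^ 2 * t ^ (2 * β - 2)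
      - ((n:ℝ) / 2) * (k * (β - 1)) * t ^ (β - 2) with hg
  have hcg : ∀ t : ℝ, 0 < t → c t = g t := by
    intro t ht
    have hat : a t ≠ 0 := (hapos t).ne'
    have e1 : t ^ (β - 1) * t ^ (β - 1) = t ^ (2 * β - 2) := by
      rw [← Real.rpow_add ht]; ring_nf
    rw [hc]
    simp only
    rw [hderiv t ht, hda2 t ht, hg]
    have d1 : ∀ x : ℝ, x * a t / a t = x := fun x => by field_simp
    have e2 : k * ((β - 1) * t ^ (β - 2)) * a t + k * t ^ (β - 1) * (k * t ^ (β - 1) * a t)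
        = (k * ((β - 1) * t ^ (β - 2)) + k * t ^ (β - 1) * (k * t ^ (β - 1))) * a t := by ring
    rw [e2, d1, d1]
    linear_combination (((n:ℝ) / 2 - (n:ℝ) ^ 2 / 4) - (n:ℝ) / 2) * k ^ 2 * e1
  -- derivative of c
  have hdc : ∀ t : ℝ, 0 < t → deriv c t
      = -((n:ℝ) ^ 2 / 4) * k ^ 2 * ((2 * β - 2) * t ^ (2 * β - 3))
        - ((n:ℝ) / 2) * (k * (β - 1)) * ((β - 2) * t ^ (β - 3)) := by
    intro t ht
    have heq : c =ᶠ[nhds t] g := by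
      filter_upwards [IsOpen.mem_nhds isOpen_Ioi ht] with s hs
      exact hcg s hs
    rw [heq.deriv_eq]
    have h1 : HasDerivAt (fun s : ℝ => s ^ (2 * β - 2)) ((2 * β - 2) * t ^ (2 * β - 3)) t := by
      have := Real.hasDerivAt_rpow_const (x := t) (p := 2 * β - 2) (Or.inl ht.ne')
      convert this using 2
      ring_nf
    have h2 : HasDerivAt (fun s : ℝ => s ^ (β - 2)) ((β - 2) * t ^ (β - 3)) t := by
      have := Real.hasDerivAt_rpow_const (x := t) (p := β - 2) (Or.inl ht.ne')
      convert this using 2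
      ring_nf
    have h3 : HasDerivAt g
        (0 - ((n:ℝ) ^ 2 / 4) * k ^ 2 * ((2 * β - 2) * t ^ (2 * β - 3))
          - ((n:ℝ) / 2) * (k * (β - 1)) * ((β - 2) * t ^ (β - 3))) t := by
      exact ((hasDerivAt_const t (m ^ 2)).sub ((h1.const_mul _))).sub (h2.const_mul _)
    rw [h3.deriv]
    ring
  -- limits
  have hlim : ∀ y : ℝ, y < 0 → Tendsto (fun t : ℝ => t ^ y) atTop (nhds 0) := by
    intro y hy
    have h := tendsto_rpow_neg_atTop (y := -y) (by linarith)
    simpa using h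
  -- eventually c positive
  have hev1 : ∀ᶠ t : ℝ in atTop, 0 < c t := by
    have hg1 : Tendsto g atTop (nhds (m ^ 2)) := by
      have h1 := (hlim (2 * β - 2) (by linarith)).const_mul (((n:ℝ) ^ 2 / 4) * k ^ 2)
      have h2 := (hlim (β - 2) (by linarith)).const_mul (((n:ℝ) / 2) * (k * (β - 1)))
      have := (tendsto_const_nhds (x := m ^ 2) (f := atTop)).sub h1 |>.sub h2
      simpa using this
    have hpos := hg1.eventually (eventually_gt_nhds (by positivity : (0:ℝ) < m ^ 2))
    filter_upwards [hpos, eventually_gt_atTop (0:ℝ)] with t h1 h2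
    rw [hcg t h2]; exact h1
  -- eventually deriv c nonpositive
  have hev2 : ∀ᶠ t : ℝ in atTop, deriv c t ≤ 0 := by
    set A : ℝ := -((n:ℝ) ^ 2 / 4) * k ^ 2 * (2 * β - 2) with hA
    set B : ℝ := -((n:ℝ) / 2) * (k * (β - 1)) * (β - 2) with hB
    have hBneg : B < 0 := by
      have h1 : 0 < (β - 1) * (β - 2) := mul_pos_of_neg_of_neg (by linarith) (by linarith)
      have : B = -((n:ℝ) / 2) * k * ((β - 1) * (β - 2)) := by rw [hB]; ring
      rw [this]
      have hn0 : 0 < (n:ℝ) / 2 := by linarith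
      nlinarith [mul_pos (mul_pos hn0 hk0) h1]
    have hlim2 : Tendsto (fun t : ℝ => A * t ^ β + B) atTop (nhds B) := by
      have := (hlim β hβ).const_mul A
      have h := this.add (tendsto_const_nhds (x := B) (f := atTop))
      simpa using h
    have hev := hlim2.eventually (eventually_lt_nhds hBneg)
    filter_upwards [hev, eventually_gt_atTop (0:ℝ)] with t hlt ht
    rw [hdc t ht]
    have e2 : t ^ (2 * β - 3) = t ^ β * t ^ (β - 3) := by
      rw [← Real.rpow_add ht]; ring_nf
    have key : -((n:ℝ) ^ 2 / 4) * k ^ 2 * ((2 * β - 2) * t ^ (2 * β - 3))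
        - ((n:ℝ) / 2) * (k * (β - 1)) * ((β - 2) * t ^ (β - 3))
        = t ^ (β - 3) * (A * t ^ β + B) := by
      rw [e2, hA, hB]; ring
    rw [key]
    exact mul_nonpos_of_nonneg_of_nonpos (Real.rpow_nonneg ht.le _) hlt.le
  obtain ⟨t₀, ht₀⟩ := (hev1.and hev2).exists_forall_of_atTop
  refine ⟨part1, max t₀ 1, lt_of_lt_of_le one_pos (le_max_right _ _), fun t ht => ?_⟩
  exact ht₀ t (le_trans (le_max_left _ _) ht)
end
end

section
/- Let n ≥ 1 be an integer, m > 0, H ∈ ℝ, β < 0 and 0 < ℓ < 4/n. Let a(t) = t^{ℓ/2} exp(H t^β) for t > 0 and define the curved mass c(t) = m² + (n/2 − n²/4)(ȧ(t)/a(t))² − (n/2)(ä(t)/a(t)). Then there exists t₀ > 0 such that for all t ≥ t₀: ȧ(t) > 0, c(t) > 0, and ċ(t) ≤ 0. -/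
noncomputable section

open Filter Real

lemma aux_hd (C r : ℝ) {t : ℝ} (ht : 0 < t) :
    HasDerivAt (fun x : ℝ => C * x ^ r) (C * r * t ^ (r - 1)) t := by
  simpa [mul_assoc] using (Real.hasDerivAt_rpow_const (p := r) (Or.inl ht.ne')).const_mul C

lemma aux_tendsto {r : ℝ} (hr : r < 0) :
    Tendsto (fun x : ℝ => x ^ r) atTop (nhds 0) := by
  simpa using tendsto_rpow_neg_atTop (y := -r) (by linarith)

/-- for the scale factor `a(t) = t^{ℓ/2} exp(H t^β)` with `β < 0` and
`0 < ℓ < 4/n`, eventually `ȧ > 0`, the curved mass is positive, and its derivative is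
non-positive. -/
theorem stmt_18 (n : ℕ) (hn : 1 ≤ n) (m H β ℓ : ℝ) (hm : 0 < m) (hβ : β < 0)
    (hℓ : 0 < ℓ) (hℓ' : ℓ < 4 / (n : ℝ))
    (a c : ℝ → ℝ) (ha : a = fun t => t ^ (ℓ / 2) * Real.exp (H * t ^ β))
    (hc : c = fun t => m ^ 2
      + ((n : ℝ) / 2 - (n : ℝ) ^ 2 / 4) * (deriv a t / a t) ^ 2
      - ((n : ℝ) / 2) * (deriv (deriv a) t / a t)) :
    ∃ t₀ : ℝ, 0 < t₀ ∧ ∀ t : ℝ, t₀ ≤ t →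
      0 < deriv a t ∧ 0 < c t ∧ deriv c t ≤ 0 := by
  have hn' : (0:ℝ) < n := by exact_mod_cast hn
  set u : ℝ → ℝ := fun t => ℓ/2 * t ^ (-1:ℝ) + H*β * t ^ (β-1) with hu_def
  set v : ℝ → ℝ := fun t => -(ℓ/2) * t ^ (-2:ℝ) + H*β*(β-1) * t ^ (β-2) with hv_def
  set w : ℝ → ℝ := fun t => ℓ * t ^ (-3:ℝ) + H*β*(β-1)*(β-2) * t ^ (β-3) with hw_def
  have hu : ∀ t : ℝ, 0 < t → HasDerivAt u (v t) t := by
    intro t ht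
    have h1 := aux_hd (ℓ/2) (-1) ht
    have h2 := aux_hd (H*β) (β-1) ht
    have := h1.add h2
    rw [show (-1:ℝ)-1 = -2 by ring, show β-1-1 = β-2 by ring] at this
    apply this.congr_deriv
    simp only [hv_def]; ring
  have hv' : ∀ t : ℝ, 0 < t → HasDerivAt v (w t) t := by
    intro t ht
    have h1 := aux_hd (-(ℓ/2)) (-2) ht
    have h2 := aux_hd (H*β*(β-1)) (β-2) ht
    have := h1.add h2
    rw [show (-2:ℝ)-1 = -3 by ring, show β-2-1 = β-3 by ring] at this
    apply this.congr_deriv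
    simp only [hw_def]; ring
  have hapos : ∀ t : ℝ, 0 < t → 0 < a t := by
    intro t ht
    rw [ha]
    exact mul_pos (Real.rpow_pos_of_pos ht _) (Real.exp_pos _)
  have ha' : ∀ t : ℝ, 0 < t → HasDerivAt a (a t * u t) t := by
    intro t ht
    have h1 : HasDerivAt (fun x : ℝ => x ^ (ℓ/2)) (ℓ/2 * t ^ (ℓ/2 - 1)) t :=
      Real.hasDerivAt_rpow_const (Or.inl ht.ne')
    have h2 : HasDerivAt (fun x : ℝ => Real.exp (H * x ^ β))
        (Real.exp (H * t ^ β) * (H * β * t ^ (β-1))) t := (aux_hd H β ht).exp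
    have := h1.mul h2
    rw [ha]
    apply this.congr_deriv
    simp only [hu_def]
    rw [show ℓ/2 - 1 = ℓ/2 + (-1) by ring, Real.rpow_add ht]
    ring
  have hda : ∀ t : ℝ, 0 < t → deriv a t = a t * u t := fun t ht => (ha' t ht).deriv
  have hdda : ∀ t : ℝ, 0 < t → deriv (deriv a) t = a t * (u t * u t + v t) := by
    intro t ht
    have heq : deriv a =ᶠ[nhds t] fun s => a s * u s :=
      Filter.eventuallyEq_of_mem (isOpen_Ioi.mem_nhds ht) fun s hs => hda s hs
    rw [heq.deriv_eq]
    have h2 : HasDerivAt (fun s => a s * u s) (a t * u t * u t + a t * v t) t :=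
      (ha' t ht).mul (hu t ht)
    rw [h2.deriv]; ring
  -- explicit formula for c on (0, ∞)
  set F : ℝ → ℝ := fun t => m^2 - (n:ℝ)^2/4 * (u t * u t) - (n:ℝ)/2 * v t with hF_def
  have hcF : ∀ t : ℝ, 0 < t → c t = F t := by
    intro t ht
    have ha0 := (hapos t ht).ne'
    rw [hc]
    simp only [hF_def]
    rw [hda t ht, hdda t ht, mul_div_cancel_left₀ _ ha0, mul_div_cancel_left₀ _ ha0]
    ring
  have hF' : ∀ t : ℝ, 0 < t →
      HasDerivAt F (-(n:ℝ)^2/2 * (u t * v t) - (n:ℝ)/2 * w t) t := by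
    intro t ht
    have := ((hasDerivAt_const t (m^2)).sub
      (((hu t ht).mul (hu t ht)).const_mul ((n:ℝ)^2/4))).sub
      ((hv' t ht).const_mul ((n:ℝ)/2))
    apply this.congr_deriv
    ring
  have hdc : ∀ t : ℝ, 0 < t → deriv c t = -(n:ℝ)^2/2 * (u t * v t) - (n:ℝ)/2 * w t := by
    intro t ht
    have heq : c =ᶠ[nhds t] F :=
      Filter.eventuallyEq_of_mem (isOpen_Ioi.mem_nhds ht) fun s hs => hcF s hs
    rw [heq.deriv_eq, (hF' t ht).deriv]
  -- key scalings
  have hscale : ∀ t : ℝ, 0 < t →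
      u t = t ^ (-1:ℝ) * (ℓ/2 + H*β * t^β) ∧
      v t = t ^ (-2:ℝ) * (-(ℓ/2) + H*β*(β-1) * t^β) ∧
      w t = t ^ (-3:ℝ) * (ℓ + H*β*(β-1)*(β-2) * t^β) := by
    intro t ht
    have e1 : t ^ (β-1) = t ^ β * t ^ (-1:ℝ) := by
      rw [show β - 1 = β + (-1) by ring, Real.rpow_add ht]
    have e2 : t ^ (β-2) = t ^ β * t ^ (-2:ℝ) := by
      rw [show β - 2 = β + (-2) by ring, Real.rpow_add ht]
    have e3 : t ^ (β-3) = t ^ β * t ^ (-3:ℝ) := by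
      rw [show β - 3 = β + (-3) by ring, Real.rpow_add ht]
    refine ⟨?_, ?_, ?_⟩ <;> simp only [hu_def, hv_def, hw_def, e1, e2, e3] <;> ring
  -- eventual statements
  have hb : Tendsto (fun t : ℝ => t ^ β) atTop (nhds 0) := aux_tendsto hβ
  -- (1) eventually deriv a > 0
  have ev1 : ∀ᶠ t in atTop, 0 < deriv a t := by
    have h1 : Tendsto (fun t : ℝ => ℓ/2 + H*β * t^β) atTop (nhds (ℓ/2)) := by
      simpa using tendsto_const_nhds.add (hb.const_mul (H*β))
    have h2 : ∀ᶠ t in atTop, 0 < ℓ/2 + H*β * t^β :=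
      h1.eventually_const_lt (by linarith)
    filter_upwards [h2, eventually_gt_atTop 0] with t h2t ht
    rw [hda t ht, (hscale t ht).1]
    exact mul_pos (hapos t ht) (mul_pos (Real.rpow_pos_of_pos ht _) h2t)
  -- (2) eventually c > 0
  have ev2 : ∀ᶠ t in atTop, 0 < c t := by
    have hu0 : Tendsto u atTop (nhds 0) := by
      have := ((aux_tendsto (show (-1:ℝ) < 0 by norm_num)).const_mul (ℓ/2)).add
        ((aux_tendsto (show β - 1 < 0 by linarith)).const_mul (H*β))
      simpa [hu_def] using this
    have hv0 : Tendsto v atTop (nhds 0) := by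
      have := ((aux_tendsto (show (-2:ℝ) < 0 by norm_num)).const_mul (-(ℓ/2))).add
        ((aux_tendsto (show β - 2 < 0 by linarith)).const_mul (H*β*(β-1)))
      simpa [hv_def] using this
    have hFlim : Tendsto F atTop (nhds (m^2)) := by
      have := ((tendsto_const_nhds (x := m^2)).sub ((hu0.mul hu0).const_mul ((n:ℝ)^2/4))).sub
        (hv0.const_mul ((n:ℝ)/2))
      simp only [mul_zero, zero_mul, sub_zero] at this
      exact this
    have h2 : ∀ᶠ t in atTop, 0 < F t :=
      hFlim.eventually_const_lt (by positivity)
    filter_upwards [h2, eventually_gt_atTop 0] with t h2t ht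
    rw [hcF t ht]; exact h2t
  -- (3) eventually deriv c ≤ 0
  have ev3 : ∀ᶠ t in atTop, deriv c t ≤ 0 := by
    set G : ℝ → ℝ := fun t => -(n:ℝ)^2/2 * ((ℓ/2 + H*β * t^β) * (-(ℓ/2) + H*β*(β-1) * t^β))
      - (n:ℝ)/2 * (ℓ + H*β*(β-1)*(β-2) * t^β) with hG_def
    have hGlim : Tendsto G atTop (nhds (-(n:ℝ)^2/2 * ((ℓ/2) * (-(ℓ/2))) - (n:ℝ)/2 * ℓ)) := by
      have hco : Continuous (fun s : ℝ => -(n:ℝ)^2/2 * ((ℓ/2 + H*β * s) * (-(ℓ/2) + H*β*(β-1) * s))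
          - (n:ℝ)/2 * (ℓ + H*β*(β-1)*(β-2) * s)) := by fun_prop
      have := (hco.tendsto 0).comp hb
      simpa [hG_def, Function.comp_def] using this
    have hL : -(n:ℝ)^2/2 * ((ℓ/2) * (-(ℓ/2))) - (n:ℝ)/2 * ℓ < 0 := by
      have hnl : (n:ℝ) * ℓ < 4 := by
        have := (lt_div_iff₀ hn').mp hℓ'
        linarith [this, mul_comm ℓ (n:ℝ)]
      nlinarith [mul_pos hn' hℓ]
    have hGneg : ∀ᶠ t in atTop, G t < 0 := hGlim.eventually_lt_const hL
    filter_upwards [hGneg, eventually_gt_atTop 0] with t hGt ht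
    obtain ⟨e1, e2, e3⟩ := hscale t ht
    have e12 : t ^ (-1:ℝ) * t ^ (-2:ℝ) = t ^ (-3:ℝ) := by
      rw [← Real.rpow_add ht]; norm_num
    have hrw : deriv c t = t ^ (-3:ℝ) * G t := by
      rw [hdc t ht, e1, e2, e3, hG_def]
      rw [← e12]; ring
    rw [hrw]
    exact le_of_lt (mul_neg_of_pos_of_neg (Real.rpow_pos_of_pos ht _) hGt)
  obtain ⟨t₀, ht₀⟩ := (ev1.and (ev2.and ev3)).exists_forall_of_atTop
  refine ⟨max t₀ 1, by positivity, fun t ht => ?_⟩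
  have := ht₀ t (le_trans (le_max_left _ _) ht)
  exact ⟨this.1, this.2.1, this.2.2⟩
end
end
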